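/- Suppose u₁, u₂ : ℕ → ℝ satisfy, along a sequence Lₙ → ∞, the bounds ‖u₁‖_{Lₙ}² ≤ C·Lₙ·(log Lₙ)^{1+δ} and ‖u₂‖_{Lₙ}² ≥ c·e^{γLₙ} for constants C, c, γ, δ > 0, where ‖u‖_L² = Σ_{k=1}^L |u(k)|². Let ρ(t) = 1/(log(1/t)·(log log(1/t))^{1+δ'}) for some δ' > δ. Then liminf_{n→∞} ρ(‖u₁‖_{Lₙ}^{-1}‖u₂‖_{Lₙ}^{-1})·‖u₁‖_{Lₙ}² = 0. -/

import Mathlib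

open Filter

/-- If along a sequence `Lₙ → ∞` one has `‖u₁‖²_{Lₙ} ≤ C Lₙ (log Lₙ)^{1+δ}` and
`‖u₂‖²_{Lₙ} ≥ c e^{γLₙ}`, then with
`ρ(t) = 1/(log(1/t)·(log log(1/t))^{1+δ'})` for `δ' > δ`:
`liminf ρ(‖u₁‖⁻¹_{Lₙ}‖u₂‖⁻¹_{Lₙ})·‖u₁‖²_{Lₙ} = 0`. -/
theorem stmt_19 (u1 u2 : ℕ → ℝ) (L : ℕ → ℕ) (hL : Tendsto L atTop atTop)
    (C c γ δ δ' : ℝ) (hC : 0 < C) (hc : 0 < c) (hγ : 0 < γ) (hδ : 0 < δ)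
    (hδ' : δ < δ')
    (h1 : ∀ n, (∑ k ∈ Finset.Icc 1 (L n), u1 k ^ 2)
      ≤ C * (L n : ℝ) * Real.log (L n) ^ ((1 : ℝ) + δ))
    (h2 : ∀ n, c * Real.exp (γ * (L n : ℝ))
      ≤ ∑ k ∈ Finset.Icc 1 (L n), u2 k ^ 2) :
    Filter.liminf
      (fun n =>
        (1 / (Real.log (1 / ((Real.sqrt (∑ k ∈ Finset.Icc 1 (L n), u1 k ^ 2))⁻¹ *
                (Real.sqrt (∑ k ∈ Finset.Icc 1 (L n), u2 k ^ 2))⁻¹))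
          * Real.log (Real.log (1 /
              ((Real.sqrt (∑ k ∈ Finset.Icc 1 (L n), u1 k ^ 2))⁻¹ *
                (Real.sqrt (∑ k ∈ Finset.Icc 1 (L n), u2 k ^ 2))⁻¹)))
              ^ ((1 : ℝ) + δ')))
          * (∑ k ∈ Finset.Icc 1 (L n), u1 k ^ 2))
      atTop = 0 := by
  have hS1nonneg : ∀ n, (0:ℝ) ≤ ∑ k ∈ Finset.Icc 1 (L n), u1 k ^ 2 :=
    fun n => Finset.sum_nonneg fun k _ => sq_nonneg _
  have hS2pos : ∀ n, (0:ℝ) < ∑ k ∈ Finset.Icc 1 (L n), u2 k ^ 2 :=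
    fun n => lt_of_lt_of_le (by positivity) (h2 n)
  by_cases hz : ∀ k, 1 ≤ k → u1 k = 0
  · -- trivial case: u1 vanishes on [1,∞)
    have hzero : ∀ n, (∑ k ∈ Finset.Icc 1 (L n), u1 k ^ 2) = 0 := by
      intro n
      refine Finset.sum_eq_zero fun k hk => ?_
      rw [hz k (Finset.mem_Icc.mp hk).1]; ring
    have heq : (fun n =>
        (1 / (Real.log (1 / ((Real.sqrt (∑ k ∈ Finset.Icc 1 (L n), u1 k ^ 2))⁻¹ *
                (Real.sqrt (∑ k ∈ Finset.Icc 1 (L n), u2 k ^ 2))⁻¹))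
          * Real.log (Real.log (1 /
              ((Real.sqrt (∑ k ∈ Finset.Icc 1 (L n), u1 k ^ 2))⁻¹ *
                (Real.sqrt (∑ k ∈ Finset.Icc 1 (L n), u2 k ^ 2))⁻¹)))
              ^ ((1 : ℝ) + δ')))
          * (∑ k ∈ Finset.Icc 1 (L n), u1 k ^ 2)) = fun _ => (0:ℝ) := by
      funext n; rw [hzero n, mul_zero]
    rw [heq, liminf_const]
  · push_neg at hz
    obtain ⟨k₀, hk₀, hu⟩ := hz
    set a : ℝ := u1 k₀ ^ 2 with ha_def
    have ha : 0 < a := by positivity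
    have hL' : Tendsto (fun n => (L n : ℝ)) atTop atTop :=
      tendsto_natCast_atTop_atTop.comp hL
    have hlog : Tendsto (fun n => Real.log (L n)) atTop atTop :=
      Real.tendsto_log_atTop.comp hL'
    have hγL : Tendsto (fun n => γ / 4 * (L n : ℝ)) atTop atTop :=
      hL'.const_mul_atTop (by positivity)
    refine Tendsto.liminf_eq ?_
    set K : ℝ := C / ((γ/4) * ((1/2):ℝ) ^ ((1:ℝ) + δ')) with hK_def
    have hhalfpow : (0:ℝ) < ((1/2):ℝ) ^ ((1:ℝ) + δ') := Real.rpow_pos_of_pos (by norm_num) _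
    have hKpos : 0 < K := div_pos hC (by positivity)
    have hbnd : Tendsto (fun n => K * Real.log (L n) ^ (δ - δ')) atTop (nhds 0) := by
      have h0 : Tendsto (fun x : ℝ => x ^ (-(δ' - δ))) atTop (nhds 0) :=
        tendsto_rpow_neg_atTop (by linarith)
      have h1' : Tendsto (fun n => Real.log (L n) ^ (δ - δ')) atTop (nhds 0) := by
        have := h0.comp hlog
        simpa [Function.comp_def, neg_sub] using this
      simpa using h1'.const_mul K
    have main : ∀ᶠ n in atTop,
        (0:ℝ) ≤ (1 / (Real.log (1 / ((Real.sqrt (∑ k ∈ Finset.Icc 1 (L n), u1 k ^ 2))⁻¹ *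
                (Real.sqrt (∑ k ∈ Finset.Icc 1 (L n), u2 k ^ 2))⁻¹))
          * Real.log (Real.log (1 /
              ((Real.sqrt (∑ k ∈ Finset.Icc 1 (L n), u1 k ^ 2))⁻¹ *
                (Real.sqrt (∑ k ∈ Finset.Icc 1 (L n), u2 k ^ 2))⁻¹)))
              ^ ((1 : ℝ) + δ')))
          * (∑ k ∈ Finset.Icc 1 (L n), u1 k ^ 2)
        ∧ (1 / (Real.log (1 / ((Real.sqrt (∑ k ∈ Finset.Icc 1 (L n), u1 k ^ 2))⁻¹ *
                (Real.sqrt (∑ k ∈ Finset.Icc 1 (L n), u2 k ^ 2))⁻¹))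
          * Real.log (Real.log (1 /
              ((Real.sqrt (∑ k ∈ Finset.Icc 1 (L n), u1 k ^ 2))⁻¹ *
                (Real.sqrt (∑ k ∈ Finset.Icc 1 (L n), u2 k ^ 2))⁻¹)))
              ^ ((1 : ℝ) + δ')))
          * (∑ k ∈ Finset.Icc 1 (L n), u1 k ^ 2)
          ≤ K * Real.log (L n) ^ (δ - δ') := by
      filter_upwards [hL.eventually_ge_atTop k₀, hL.eventually_ge_atTop 1,
        hγL.eventually_ge_atTop (max 3 (-(Real.log a + Real.log c)/2)),
        hlog.eventually_ge_atTop (max 2 (-2 * Real.log (γ/4)))] with n hn1 hn4 hn2 hn3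
      set S1 := ∑ k ∈ Finset.Icc 1 (L n), u1 k ^ 2 with hS1d
      set S2 := ∑ k ∈ Finset.Icc 1 (L n), u2 k ^ 2 with hS2d
      have haS1 : a ≤ S1 :=
        Finset.single_le_sum (f := fun k => u1 k ^ 2) (fun i _ => sq_nonneg _)
          (Finset.mem_Icc.mpr ⟨hk₀, hn1⟩)
      have hS1pos : 0 < S1 := lt_of_lt_of_le ha haS1
      have hLpos : (0:ℝ) < (L n : ℝ) := by exact_mod_cast Nat.lt_of_lt_of_le Nat.zero_lt_one hn4
      have hlogL2 : (2:ℝ) ≤ Real.log (L n) := le_trans (le_max_left _ _) hn3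
      have hlogLγ : -2 * Real.log (γ/4) ≤ Real.log (L n) := le_trans (le_max_right _ _) hn3
      have hγL3 : (3:ℝ) ≤ γ/4 * (L n : ℝ) := le_trans (le_max_left _ _) hn2
      have hγLa : -(Real.log a + Real.log c)/2 ≤ γ/4 * (L n : ℝ) := le_trans (le_max_right _ _) hn2
      have hinv : 1 / ((Real.sqrt S1)⁻¹ * (Real.sqrt S2)⁻¹) = Real.sqrt S1 * Real.sqrt S2 := by
        rw [one_div, mul_inv, inv_inv, inv_inv]
      rw [hinv]
      have hD : Real.log (Real.sqrt S1 * Real.sqrt S2)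
          = Real.log S1 / 2 + Real.log S2 / 2 := by
        rw [Real.log_mul (ne_of_gt (Real.sqrt_pos.mpr hS1pos)) (ne_of_gt (Real.sqrt_pos.mpr (hS2pos n))),
          Real.log_sqrt hS1pos.le, Real.log_sqrt (hS2pos n).le]
      have hlogS1 : Real.log a ≤ Real.log S1 := Real.log_le_log ha haS1
      have hlogS2 : Real.log c + γ * (L n : ℝ) ≤ Real.log S2 := by
        have := Real.log_le_log (by positivity) (h2 n)
        rwa [Real.log_mul (ne_of_gt hc) (Real.exp_ne_zero _), Real.log_exp] at this
      have hDge : γ/4 * (L n : ℝ) ≤ Real.log (Real.sqrt S1 * Real.sqrt S2) := by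
        rw [hD]; nlinarith [hγLa]
      have hDpos : (0:ℝ) < Real.log (Real.sqrt S1 * Real.sqrt S2) := by linarith
      have hlogD : (1/2) * Real.log (L n) ≤ Real.log (Real.log (Real.sqrt S1 * Real.sqrt S2)) := by
        have h5 : Real.log (γ/4 * (L n : ℝ)) ≤ Real.log (Real.log (Real.sqrt S1 * Real.sqrt S2)) :=
          Real.log_le_log (by linarith) hDge
        have h6 : Real.log (γ/4 * (L n : ℝ)) = Real.log (γ/4) + Real.log (L n) :=
          Real.log_mul (by positivity) (ne_of_gt hLpos)
        rw [h6] at h5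
        linarith
      have hhalfL1 : (1:ℝ) ≤ (1/2) * Real.log (L n) := by linarith
      have hEge : ((1/2) * Real.log (L n)) ^ ((1:ℝ) + δ')
          ≤ Real.log (Real.log (Real.sqrt S1 * Real.sqrt S2)) ^ ((1:ℝ) + δ') :=
        Real.rpow_le_rpow (by linarith) hlogD (by linarith)
      have hEpos : (0:ℝ) < ((1/2) * Real.log (L n)) ^ ((1:ℝ) + δ') :=
        Real.rpow_pos_of_pos (by linarith) _
      have hDEpos : 0 < Real.log (Real.sqrt S1 * Real.sqrt S2) *
          Real.log (Real.log (Real.sqrt S1 * Real.sqrt S2)) ^ ((1:ℝ) + δ') :=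
        mul_pos hDpos (lt_of_lt_of_le hEpos hEge)
      constructor
      · exact mul_nonneg (one_div_nonneg.mpr hDEpos.le) (hS1nonneg n)
      · rw [one_div_mul_eq_div]
        have hden_le : (γ/4 * (L n : ℝ)) * ((1/2) * Real.log (L n)) ^ ((1:ℝ) + δ')
            ≤ Real.log (Real.sqrt S1 * Real.sqrt S2) *
              Real.log (Real.log (Real.sqrt S1 * Real.sqrt S2)) ^ ((1:ℝ) + δ') :=
          mul_le_mul hDge hEge hEpos.le hDpos.le
        have hstep : S1 / (Real.log (Real.sqrt S1 * Real.sqrt S2) *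
              Real.log (Real.log (Real.sqrt S1 * Real.sqrt S2)) ^ ((1:ℝ) + δ'))
            ≤ (C * (L n : ℝ) * Real.log (L n) ^ ((1:ℝ) + δ)) /
              ((γ/4 * (L n : ℝ)) * ((1/2) * Real.log (L n)) ^ ((1:ℝ) + δ')) :=
          div_le_div₀ (by positivity) (h1 n) (by positivity) hden_le
        refine le_trans hstep (le_of_eq ?_)
        have hlogLpos : (0:ℝ) < Real.log (L n) := by linarith
        have e1 : ((1/2) * Real.log (L n)) ^ ((1:ℝ) + δ')
            = ((1/2):ℝ) ^ ((1:ℝ) + δ') * Real.log (L n) ^ ((1:ℝ) + δ') :=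
          Real.mul_rpow (by norm_num) hlogLpos.le
        have e2 : Real.log (L n) ^ ((1:ℝ) + δ)
            = Real.log (L n) ^ (δ - δ') * Real.log (L n) ^ ((1:ℝ) + δ') := by
          rw [← Real.rpow_add hlogLpos]; ring_nf
        have hLne : (L n : ℝ) ≠ 0 := ne_of_gt hLpos
        have hpowne : Real.log (L n) ^ ((1:ℝ) + δ') ≠ 0 :=
          ne_of_gt (Real.rpow_pos_of_pos hlogLpos _)
        rw [e1, e2, hK_def]
        field_simp
    exact tendsto_of_tendsto_of_tendsto_of_le_of_le' tendsto_const_nhds hbnd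
      (main.mono fun n h => h.1) (main.mono fun n h => h.2)
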